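/- In a regular frame L, if b is way-below a, then b is well-inside a. Hence in a compact regular frame the way-below and well-inside relations coincide. -/

import Mathlib

variable {L : Type*}

def pcompl [Order.Frame L] (y : L) : L := sSup {c | c ⊓ y = ⊥}

def WellInside [Order.Frame L] (b a : L) : Prop := a ⊔ pcompl b = ⊤

def WayBelow [Order.Frame L] (b a : L) : Prop :=
  ∀ U : Set L, a ≤ sSup U → ∃ u : Finset L, ↑u ⊆ U ∧ b ≤ u.sup id

def IsCompactFrame (L : Type*) [Order.Frame L] : Prop :=
  ∀ U : Set L, sSup U = ⊤ → ∃ u : Finset L, ↑u ⊆ U ∧ u.sup id = ⊤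

def IsRegularFrame (L : Type*) [Order.Frame L] : Prop :=
  ∀ a : L, a = sSup {b | WellInside b a}

def IsLocallyCompactFrame (L : Type*) [Order.Frame L] : Prop :=
  ∀ a : L, a = sSup {b | WayBelow b a}

lemma pcompl_inf_self [Order.Frame L] (b : L) : pcompl b ⊓ b = ⊥ := by
  rw [pcompl, sSup_inf_eq]
  simp only [Set.mem_setOf_eq, iSup_eq_bot]
  intro i hi; exact hi

lemma pcompl_anti [Order.Frame L] {b c : L} (h : b ≤ c) : pcompl c ≤ pcompl b := by
  apply sSup_le_sSup
  intro x hx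
  simp only [Set.mem_setOf_eq] at *
  exact le_bot_iff.mp (le_trans (inf_le_inf_left x h) hx.le)

lemma wellInside_bot [Order.Frame L] (a : L) : WellInside ⊥ a := by
  rw [WellInside, pcompl]
  have : (⊤ : L) ∈ {c : L | c ⊓ ⊥ = ⊥} := by simp
  rw [eq_top_iff]
  exact le_trans (le_sSup this) le_sup_right

lemma wellInside_sup [Order.Frame L] {a c d : L} (hc : WellInside c a)
    (hd : WellInside d a) : WellInside (c ⊔ d) a := by
  rw [WellInside, eq_top_iff]
  have key : pcompl c ⊓ pcompl d ≤ pcompl (c ⊔ d) := by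
    apply le_sSup
    simp only [Set.mem_setOf_eq, inf_sup_left]
    rw [inf_comm (pcompl c ⊓ pcompl d) c, inf_comm (pcompl c ⊓ pcompl d) d]
    have h1 : c ⊓ (pcompl c ⊓ pcompl d) ≤ ⊥ := by
      calc c ⊓ (pcompl c ⊓ pcompl d) ≤ c ⊓ pcompl c := inf_le_inf_left _ inf_le_left
      _ = ⊥ := by rw [inf_comm]; exact pcompl_inf_self c
    have h2 : d ⊓ (pcompl c ⊓ pcompl d) ≤ ⊥ := by
      calc d ⊓ (pcompl c ⊓ pcompl d) ≤ d ⊓ pcompl d := inf_le_inf_left _ inf_le_right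
      _ = ⊥ := by rw [inf_comm]; exact pcompl_inf_self d
    exact le_bot_iff.mp (sup_le h1 h2)
  calc (⊤ : L) = (a ⊔ pcompl c) ⊓ (a ⊔ pcompl d) := by rw [hc, hd, top_inf_eq]
  _ = a ⊔ (pcompl c ⊓ pcompl d) := (sup_inf_left _ _ _).symm
  _ ≤ a ⊔ pcompl (c ⊔ d) := sup_le_sup_left key a

lemma wellInside_of_le [Order.Frame L] {a b c : L} (hbc : b ≤ c)
    (h : WellInside c a) : WellInside b a := by
  rw [WellInside, eq_top_iff]
  rw [WellInside] at h
  rw [← h]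
  exact sup_le_sup_left (pcompl_anti hbc) a

lemma wellInside_finsetSup [Order.Frame L] {a : L} {u : Finset L}
    (hu : ↑u ⊆ {c : L | WellInside c a}) : WellInside (u.sup id) a := by
  classical
  induction u using Finset.induction_on with
  | empty => simpa using wellInside_bot a
  | insert x s hx ih =>
    simp only [Finset.coe_insert, Set.insert_subset_iff] at hu
    rw [Finset.sup_insert]
    exact wellInside_sup hu.1 (ih hu.2)

theorem stmt2 [Order.Frame L] (hr : IsRegularFrame L) :
    (∀ a b : L, WayBelow b a → WellInside b a) ∧
    (IsCompactFrame L → ∀ a b : L, WayBelow b a ↔ WellInside b a) := by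
  have fwd : ∀ a b : L, WayBelow b a → WellInside b a := by
    intro a b hwb
    obtain ⟨u, hu, hble⟩ := hwb {c | WellInside c a} (hr a).le
    exact wellInside_of_le hble (wellInside_finsetSup hu)
  refine ⟨fwd, fun hc a b => ⟨fwd a b, ?_⟩⟩
  intro hwi U haU
  classical
  have htop : sSup (U ∪ {pcompl b}) = ⊤ := by
    rw [eq_top_iff, ← hwi]
    apply sup_le
    · exact le_trans haU (sSup_le_sSup (Set.subset_union_left))
    · exact le_sSup (Set.mem_union_right _ rfl)
  obtain ⟨u, hu, hsup⟩ := hc _ htop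
  refine ⟨u.erase (pcompl b), ?_, ?_⟩
  · intro x hx
    simp only [Finset.coe_erase, Set.mem_diff, Set.mem_singleton_iff] at hx
    rcases hu hx.1 with h | h
    · exact h
    · exact absurd h hx.2
  · have hle : (⊤ : L) ≤ (u.erase (pcompl b)).sup id ⊔ pcompl b := by
      rw [← hsup]
      apply Finset.sup_le
      intro x hx
      by_cases hxe : x = pcompl b
      · subst hxe; exact le_sup_right
      · exact le_trans (Finset.le_sup (f := id) (Finset.mem_erase.mpr ⟨hxe, hx⟩)) le_sup_left
    calc b = b ⊓ ⊤ := (inf_top_eq b).symm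
    _ ≤ b ⊓ ((u.erase (pcompl b)).sup id ⊔ pcompl b) := inf_le_inf_left _ hle
    _ = (b ⊓ (u.erase (pcompl b)).sup id) ⊔ (b ⊓ pcompl b) := inf_sup_left _ _ _
    _ ≤ (u.erase (pcompl b)).sup id := by
        rw [inf_comm b (pcompl b), pcompl_inf_self, sup_bot_eq]
        exact inf_le_right
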